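/- Let E be a row-finite graph and v ∈ E^0. The vertex v is a line-point (v has no bifurcation and v does not connect to a cycle) if and only if v = v(0) ∈ M_E^{gr} is minimal and aperiodic (there is no nonzero n ∈ ℤ with ^n v = v). -/

import Mathlib

set_option linter.unusedSectionVars false

/-- The algebraic preorder on a commutative monoid: `a ≤ b` iff `b = a + c` for some `c`. -/
def algLE {M : Type*} [AddCommMonoid M] (a b : M) : Prop := ∃ c, b = a + c

/-- A row-finite directed graph: vertices `V`, edges `Ed`, source `s`, range `r`,
and for each vertex the (finite) set of edges it emits. -/
structure RFGraph (V : Type) (Ed : Type) where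
  s : Ed → V
  r : Ed → V
  emit : V → Finset Ed
  mem_emit : ∀ e v, e ∈ emit v ↔ s e = v

namespace RFGraph

variable {V Ed : Type} [DecidableEq V] (G : RFGraph V Ed)

/-- The one-step rewriting relation `→₁` on the free commutative monoid `Multiset V`:
replace one occurrence of a non-sink vertex `v` by the sum of ranges of edges emitted by `v`. -/
def Step1 (a b : Multiset V) : Prop :=
  ∃ v : V, v ∈ a ∧ G.emit v ≠ ∅ ∧ b = a.erase v + (G.emit v).val.map G.r

/-- The reflexive-transitive closure `→` of `→₁`. -/
def Step : Multiset V → Multiset V → Prop := Relation.ReflTransGen G.Step1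

/-- The congruence on the free commutative monoid generated by `→₁`. -/
def gcon : AddCon (Multiset V) := addConGen G.Step1

/-- The graph monoid `M_E`. -/
def GM := G.gcon.Quotient

instance : AddCommMonoid G.GM := inferInstanceAs (AddCommMonoid G.gcon.Quotient)

/-- One-step rewriting for the talented monoid: replace `v(i)` by `Σ_{e ∈ s⁻¹(v)} r(e)(i+1)`. -/
def TStep1 (a b : Multiset (V × ℤ)) : Prop :=
  ∃ (v : V) (i : ℤ), (v, i) ∈ a ∧ G.emit v ≠ ∅ ∧
    b = a.erase (v, i) + (G.emit v).val.map (fun e => (G.r e, i + 1))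

/-- The congruence generated by the talented one-step relation. -/
def tcon : AddCon (Multiset (V × ℤ)) := addConGen G.TStep1

/-- The talented monoid `M_E^{gr}`. -/
def TM := G.tcon.Quotient

instance : AddCommMonoid G.TM := inferInstanceAs (AddCommMonoid G.tcon.Quotient)

/-- The generator `v(i)` of the talented monoid. -/
def tgen (v : V) (i : ℤ) : G.TM := G.tcon.mk' {(v, i)}

/-- The shift `v(i) ↦ v(i+n)` on the free commutative monoid `Multiset (V × ℤ)`. -/
def shiftMul (n : ℤ) : Multiset (V × ℤ) →+ Multiset (V × ℤ) where
  toFun a := a.map fun p => (p.1, p.2 + n)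
  map_zero' := rfl
  map_add' a b := Multiset.map_add (fun p => (p.1, p.2 + n)) a b

lemma shift_inj (n : ℤ) : Function.Injective (fun p : V × ℤ => (p.1, p.2 + n)) := by
  rintro ⟨a, b⟩ ⟨c, d⟩ h
  simp only [Prod.mk.injEq] at h
  exact Prod.ext h.1 (by omega)

lemma tstep1_shift (n : ℤ) {a b : Multiset (V × ℤ)} (h : G.TStep1 a b) :
    G.TStep1 (shiftMul n a) (shiftMul n b) := by
  obtain ⟨v, i, hv, hne, rfl⟩ := h
  refine ⟨v, i + n, Multiset.mem_map.2 ⟨(v, i), hv, rfl⟩, hne, ?_⟩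
  show Multiset.map _ _ = _
  rw [Multiset.map_add]
  congr 1
  · exact (Multiset.map_erase _ (shift_inj n) (v, i) a)
  · rw [Multiset.map_map]
    congr 1
    funext e
    simp only [Function.comp_apply]
    congr 1
    omega

lemma tcon_shift (n : ℤ) {a b : Multiset (V × ℤ)} (h : G.tcon a b) :
    G.tcon (shiftMul n a) (shiftMul n b) := by
  have hle : addConGen G.TStep1 ≤
      { r := fun a b => G.tcon (shiftMul n a) (shiftMul n b)
        iseqv := ⟨fun _ => G.tcon.refl _, fun h => G.tcon.symm h,
          fun h₁ h₂ => G.tcon.trans h₁ h₂⟩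
        add' := fun h₁ h₂ => by
          simpa only [map_add] using G.tcon.add h₁ h₂ } := by
    refine AddCon.addConGen_le.2 ?_
    intro x y hxy
    exact AddConGen.Rel.of _ _ (G.tstep1_shift n hxy)
  exact hle h

/-- The `ℤ`-action on the talented monoid, `ⁿ(v(i)) = v(i+n)`. -/
def tshift (n : ℤ) : G.TM →+ G.TM :=
  G.tcon.lift (G.tcon.mk'.comp (shiftMul n)) (by
    intro a b h
    show G.tcon.mk' (shiftMul n a) = G.tcon.mk' (shiftMul n b)
    exact (AddCon.eq _).2 (G.tcon_shift n h))

/-- Reachability: there is a (possibly trivial) path from `u` to `v`. -/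
def Reaches (u v : V) : Prop :=
  Relation.ReflTransGen (fun a b => ∃ e : Ed, G.s e = a ∧ G.r e = b) u v

/-- A cycle: a nonempty path of edges, closed up, with distinct source vertices. -/
def IsCycle (p : List Ed) : Prop :=
  ∃ h : p ≠ [], List.Chain' (fun e f => G.r e = G.s f) p ∧
    G.r (p.getLast h) = G.s (p.head h) ∧ (p.map G.s).Nodup

/-- The cycle `p` has an exit: some vertex on it emits an edge not on the cycle. -/
def HasExit (p : List Ed) : Prop :=
  ∃ e : Ed, (∃ f ∈ p, G.s e = G.s f) ∧ e ∉ p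

/-- The cycle `p` has no exit: every vertex on it emits exactly its cycle edge. -/
def NoExit (p : List Ed) : Prop :=
  ∀ e ∈ p, G.emit (G.s e) = {e}

/-- `ℤ`-order-ideals of the talented monoid. -/
def IsOrderIdeal (I : Set G.TM) : Prop :=
  (0 : G.TM) ∈ I ∧ (∀ a b : G.TM, a ∈ I → b ∈ I → a + b ∈ I) ∧
    (∀ (n : ℤ) (a : G.TM), a ∈ I → G.tshift n a ∈ I) ∧
    (∀ a b : G.TM, algLE a b → b ∈ I → a ∈ I)

/-- The smallest `ℤ`-order-ideal of `M_E^{gr}` containing `v(0)`. -/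
def genIdeal (v : V) : Set G.TM :=
  ⋂₀ {I : Set G.TM | G.IsOrderIdeal I ∧ G.tgen v 0 ∈ I}

/-- Minimality in the talented monoid: `0 ≠ b ≤ a` implies `a ≤ b`. -/
def TMin (a : G.TM) : Prop := ∀ b : G.TM, b ≠ 0 → algLE b a → algLE a b

/-- The covering graph `\bar E`. -/
def cover : RFGraph (V × ℤ) (Ed × ℤ) where
  s p := (G.s p.1, p.2)
  r p := (G.r p.1, p.2 + 1)
  emit p := (G.emit p.1).map ⟨fun e => (e, p.2), fun a b h => by
    simpa using congrArg Prod.fst h⟩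
  mem_emit := by
    rintro ⟨e, n⟩ ⟨v, m⟩
    simp only [Finset.mem_map, Function.Embedding.coeFn_mk, Prod.mk.injEq, G.mem_emit]
    constructor
    · rintro ⟨a, ha, rfl, rfl⟩; exact ⟨ha, rfl⟩
    · rintro ⟨rfl, rfl⟩
      first
        | exact ⟨e, rfl, rfl, rfl⟩
        | exact ⟨e, rfl, rfl⟩
        | exact ⟨rfl, rfl⟩
        | rfl
        | simp

/-- The set of vertices on a cycle. -/
def cycVerts (p : List Ed) : Set V := {v | ∃ e ∈ p, G.s e = v}

end RFGraph

namespace RFGraph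

variable {V Ed : Type} [DecidableEq V] (G : RFGraph V Ed)

/-! ### Basic lemmas about the one-step relation -/

/-- Reflexive-transitive closure of the talented one-step relation. -/
def TStep : Multiset (V × ℤ) → Multiset (V × ℤ) → Prop := Relation.ReflTransGen G.TStep1


lemma emit_map_ne_zero {v : V} (h : G.emit v ≠ ∅) (i : ℤ) :
    (G.emit v).val.map (fun e => (G.r e, i + 1)) ≠ 0 := by
  obtain ⟨e, he⟩ := Finset.nonempty_iff_ne_empty.2 h
  intro h0
  have : (G.r e, i + 1) ∈ (G.emit v).val.map (fun e => (G.r e, i + 1)) :=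
    Multiset.mem_map.2 ⟨e, by simpa using he, rfl⟩
  rw [h0] at this
  simp at this

lemma tstep1_add_right {a b : Multiset (V × ℤ)} (h : G.TStep1 a b) (c : Multiset (V × ℤ)) :
    G.TStep1 (a + c) (b + c) := by
  obtain ⟨v, i, hm, hne, rfl⟩ := h
  refine ⟨v, i, Multiset.mem_add.2 (Or.inl hm), hne, ?_⟩
  rw [Multiset.erase_add_left_pos _ hm]
  abel

lemma tstep_add_right {a b : Multiset (V × ℤ)} (h : G.TStep a b) (c : Multiset (V × ℤ)) :
    G.TStep (a + c) (b + c) :=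
  Relation.ReflTransGen.lift (fun x => x + c) (fun _ _ h => G.tstep1_add_right h c) _ _ h

lemma tstep_add_left {a b : Multiset (V × ℤ)} (h : G.TStep a b) (c : Multiset (V × ℤ)) :
    G.TStep (c + a) (c + b) := by
  rw [add_comm c a, add_comm c b]; exact G.tstep_add_right h c

lemma tstep_add {a b c d : Multiset (V × ℤ)} (h₁ : G.TStep a b) (h₂ : G.TStep c d) :
    G.TStep (a + c) (b + d) :=
  (G.tstep_add_right h₁ c).trans (G.tstep_add_left h₂ b)

lemma tstep_zero {d : Multiset (V × ℤ)} (h : G.TStep 0 d) : d = 0 := by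
  rcases h.cases_head with h | ⟨c, h1, _⟩
  · exact h.symm
  · obtain ⟨v, i, hm, _, _⟩ := h1
    simp at hm

lemma tstep1_card {a b : Multiset (V × ℤ)} (h : G.TStep1 a b) :
    Multiset.card a ≤ Multiset.card b := by
  obtain ⟨v, i, hm, hne, rfl⟩ := h
  have h1 : Multiset.card a = Multiset.card (a.erase (v, i)) + 1 := by
    conv_lhs => rw [← Multiset.cons_erase hm]
    simp
  have h2 : 0 < Multiset.card ((G.emit v).val.map (fun e => (G.r e, i + 1))) :=
    Multiset.card_pos.2 (G.emit_map_ne_zero hne i)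
  simp only [Multiset.card_add]
  omega

lemma tstep_card {a b : Multiset (V × ℤ)} (h : G.TStep a b) :
    Multiset.card a ≤ Multiset.card b := by
  induction h with
  | refl => exact le_rfl
  | tail _ h ih => exact ih.trans (G.tstep1_card h)

lemma tstep_desc {a d : Multiset (V × ℤ)} (h : G.TStep a d) :
    ∀ x ∈ a, ∃ y ∈ d, x.2 ≤ y.2 := by
  induction h using Relation.ReflTransGen.head_induction_on with
  | refl => exact fun x hx => ⟨x, hx, le_rfl⟩
  | @head s c h1 _ ih =>
    intro x hx
    obtain ⟨v, i, hm, hne, rfl⟩ := h1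
    by_cases hxe : x ∈ s.erase (v, i)
    · exact ih x (Multiset.mem_add.2 (Or.inl hxe))
    · have hx1 : x = (v, i) := by
        by_contra hne'
        exact hxe ((Multiset.mem_erase_of_ne hne').2 hx)
      obtain ⟨e, he⟩ := Finset.nonempty_iff_ne_empty.2 hne
      have hmem : (G.r e, i + 1) ∈ s.erase (v, i) + (G.emit v).val.map (fun e => (G.r e, i + 1)) :=
        Multiset.mem_add.2 (Or.inr (Multiset.mem_map.2 ⟨e, by simpa using he, rfl⟩))
      obtain ⟨y, hy, hle⟩ := ih _ hmem
      exact ⟨y, hy, by rw [hx1]; exact le_trans (by omega) hle⟩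

lemma tstep_split {s d : Multiset (V × ℤ)} (h : G.TStep s d) :
    ∀ a b, s = a + b → ∃ d₁ d₂, d = d₁ + d₂ ∧ G.TStep a d₁ ∧ G.TStep b d₂ := by
  induction h using Relation.ReflTransGen.head_induction_on with
  | refl => exact fun a b h => ⟨a, b, h, .refl, .refl⟩
  | head h1 _ ih =>
    rintro a b rfl
    obtain ⟨v, i, hm, hne, rfl⟩ := h1
    rcases Multiset.mem_add.1 hm with hma | hmb
    · have heq : (a + b).erase (v, i) + (G.emit v).val.map (fun e => (G.r e, i + 1)) =
          (a.erase (v, i) + (G.emit v).val.map (fun e => (G.r e, i + 1))) + b := by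
        rw [Multiset.erase_add_left_pos _ hma]; abel
      obtain ⟨d₁, d₂, rfl, hs₁, hs₂⟩ := ih _ _ heq
      exact ⟨d₁, d₂, rfl, .head ⟨v, i, hma, hne, rfl⟩ hs₁, hs₂⟩
    · have heq : (a + b).erase (v, i) + (G.emit v).val.map (fun e => (G.r e, i + 1)) =
          a + (b.erase (v, i) + (G.emit v).val.map (fun e => (G.r e, i + 1))) := by
        rw [Multiset.erase_add_right_pos _ hmb]; abel
      obtain ⟨d₁, d₂, rfl, hs₁, hs₂⟩ := ih _ _ heq
      exact ⟨d₁, d₂, rfl, hs₁, .head ⟨v, i, hmb, hne, rfl⟩ hs₂⟩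

/-! ### Confluence and the characterization of `tcon` -/

lemma tstep1_diamond {a b c : Multiset (V × ℤ)} (h₁ : G.TStep1 a b) (h₂ : G.TStep1 a c) :
    b = c ∨ ∃ d, G.TStep1 b d ∧ G.TStep1 c d := by
  obtain ⟨v, i, hv, hve, rfl⟩ := h₁
  obtain ⟨w, j, hw, hwe, rfl⟩ := h₂
  by_cases hvw : (v, i) = (w, j)
  · injection hvw with h1 h2; subst h1; subst h2; left; rfl
  · right
    have hw' : (w, j) ∈ a.erase (v, i) := (Multiset.mem_erase_of_ne (Ne.symm hvw)).2 hw
    have hv' : (v, i) ∈ a.erase (w, j) := (Multiset.mem_erase_of_ne hvw).2 hv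
    refine ⟨(a.erase (v, i)).erase (w, j) + (G.emit v).val.map (fun e => (G.r e, i + 1))
      + (G.emit w).val.map (fun e => (G.r e, j + 1)), ⟨w, j, ?_, hwe, ?_⟩, ⟨v, i, ?_, hve, ?_⟩⟩
    · exact Multiset.mem_add.2 (Or.inl hw')
    · rw [Multiset.erase_add_left_pos _ hw']
    · exact Multiset.mem_add.2 (Or.inl hv')
    · rw [Multiset.erase_add_left_pos _ hv', Multiset.erase_comm]
      abel

lemma tstep_confluent {a b c : Multiset (V × ℤ)} (h₁ : G.TStep a b) (h₂ : G.TStep a c) :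
    Relation.Join G.TStep b c := by
  refine Relation.church_rosser ?_ h₁ h₂
  intro a b c hab hac
  rcases G.tstep1_diamond hab hac with rfl | ⟨d, hbd, hcd⟩
  · exact ⟨b, .refl, .refl⟩
  · exact ⟨d, .single hbd, .single hcd⟩

/-- The congruence `tcon`, viewed as joinability. -/
def joinCon : AddCon (Multiset (V × ℤ)) where
  r := Relation.Join G.TStep
  iseqv := Relation.equivalence_join_reflTransGen (fun a b c hab hac => by
    rcases G.tstep1_diamond hab hac with rfl | ⟨d, hbd, hcd⟩
    · exact ⟨b, .refl, .refl⟩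
    · exact ⟨d, .single hbd, .single hcd⟩)
  add' := by
    rintro a b c d ⟨x, hax, hbx⟩ ⟨y, hcy, hdy⟩
    exact ⟨x + y, G.tstep_add hax hcy, G.tstep_add hbx hdy⟩

lemma tstep1_tcon {a b : Multiset (V × ℤ)} (h : G.TStep1 a b) : G.tcon a b :=
  AddConGen.Rel.of _ _ h

lemma tstep_tcon {a b : Multiset (V × ℤ)} (h : G.TStep a b) : G.tcon a b := by
  induction h with
  | refl => exact G.tcon.refl _
  | tail _ h ih => exact G.tcon.trans ih (G.tstep1_tcon h)

lemma tcon_iff_join {a b : Multiset (V × ℤ)} :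
    G.tcon a b ↔ Relation.Join G.TStep a b := by
  constructor
  · intro h
    have hle : G.tcon ≤ G.joinCon := by
      refine AddCon.addConGen_le.2 fun x y hxy => ?_
      exact ⟨y, .single hxy, .refl⟩
    exact hle h
  · rintro ⟨d, had, hbd⟩
    exact G.tcon.trans (G.tstep_tcon had) (G.tcon.symm (G.tstep_tcon hbd))


/-! ### The weight function and conical-type facts -/

/-- Weight function with fuel. -/
def muFuel : ℕ → V × ℤ → ℕ
  | 0, _ => 1
  | n + 1, p =>
    if (G.emit p.1).card = 0 then 1
    else ((G.emit p.1).val.map (fun e => muFuel n (G.r e, p.2 + 1))).sum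

lemma muFuel_pos : ∀ (n : ℕ) (p : V × ℤ), 1 ≤ G.muFuel n p := by
  intro n
  induction n with
  | zero => intro p; exact le_rfl
  | succ n ih =>
    intro p
    rw [show G.muFuel (n + 1) p = if (G.emit p.1).card = 0 then 1
      else ((G.emit p.1).val.map (fun e => G.muFuel n (G.r e, p.2 + 1))).sum from rfl]
    split
    · exact le_rfl
    · rename_i hne
      have hne' : G.emit p.1 ≠ ∅ := by
        simpa [Finset.card_eq_zero] using hne
      obtain ⟨e, he⟩ := Finset.nonempty_iff_ne_empty.2 hne'
      have he' : e ∈ (G.emit p.1).val := he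
      obtain ⟨t, ht⟩ := Multiset.exists_cons_of_mem he'
      rw [ht, Multiset.map_cons, Multiset.sum_cons]
      have h2 := ih (G.r e, p.2 + 1)
      omega

/-- The weight function cut off at level `J`. -/
def mu (J : ℤ) (p : V × ℤ) : ℕ := G.muFuel (J - p.2).toNat p

lemma mu_pos (J : ℤ) (p : V × ℤ) : 1 ≤ G.mu J p := G.muFuel_pos _ p

lemma mu_eq (J : ℤ) (v : V) (i : ℤ) (hi : i < J) (hne : G.emit v ≠ ∅) :
    G.mu J (v, i) = ((G.emit v).val.map (fun e => G.mu J (G.r e, i + 1))).sum := by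
  have h1 : (J - i).toNat = (J - (i + 1)).toNat + 1 := by omega
  have hcard : ¬ (G.emit v).card = 0 := by
    simpa [Finset.card_eq_zero] using hne
  show G.muFuel (J - i).toNat (v, i) = _
  rw [h1, muFuel, if_neg hcard]
  rfl

/-- The total weight of a configuration. -/
def Phi (J : ℤ) (m : Multiset (V × ℤ)) : ℕ := (m.map (G.mu J)).sum

lemma Phi_add (J : ℤ) (a b : Multiset (V × ℤ)) : G.Phi J (a + b) = G.Phi J a + G.Phi J b := by
  simp [Phi]

lemma Phi_pos {m : Multiset (V × ℤ)} (hm : m ≠ 0) (J : ℤ) : 1 ≤ G.Phi J m := by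
  obtain ⟨x, hx⟩ := Multiset.exists_mem_of_ne_zero hm
  obtain ⟨t, rfl⟩ := Multiset.exists_cons_of_mem hx
  rw [Phi, Multiset.map_cons, Multiset.sum_cons]
  have := G.mu_pos J x
  omega

lemma Phi_step1 {a b : Multiset (V × ℤ)} (J : ℤ) (h : G.TStep1 a b)
    (hb : ∀ x ∈ b, x.2 < J) : G.Phi J a = G.Phi J b := by
  obtain ⟨v, i, hm, hne, rfl⟩ := h
  have hiJ : i < J := by
    obtain ⟨e, he⟩ := Finset.nonempty_iff_ne_empty.2 hne
    have hh : ((G.r e, i + 1) : V × ℤ) ∈ a.erase (v, i) + (G.emit v).val.map (fun e => (G.r e, i + 1)) :=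
      Multiset.mem_add.2 (Or.inr (Multiset.mem_map.2 ⟨e, he, rfl⟩))
    have := hb _ hh
    simp only at this
    omega
  have h1 : a = (v, i) ::ₘ a.erase (v, i) := (Multiset.cons_erase hm).symm
  conv_lhs => rw [h1]
  rw [Phi, Phi, Multiset.map_cons, Multiset.sum_cons, Multiset.map_add, Multiset.sum_add,
    Multiset.map_map]
  rw [G.mu_eq J v i hiJ hne]
  simp only [Function.comp_def]
  ring

lemma Phi_step {a d : Multiset (V × ℤ)} (J : ℤ) (h : G.TStep a d)
    (hd : ∀ x ∈ d, x.2 < J) : G.Phi J a = G.Phi J d := by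
  induction h using Relation.ReflTransGen.head_induction_on with
  | refl => rfl
  | @head s c h1 h2 ih =>
    have hc : ∀ x ∈ c, x.2 < J := by
      intro x hx
      obtain ⟨y, hy, hle⟩ := G.tstep_desc h2 x hx
      exact lt_of_le_of_lt hle (hd y hy)
    rw [G.Phi_step1 J h1 hc, ih]

lemma exists_bound (d : Multiset (V × ℤ)) : ∃ J : ℤ, ∀ x ∈ d, x.2 < J := by
  refine ⟨(d.map (fun y => |y.2|)).sum + 1, ?_⟩
  intro x hx
  have h1 : x.2 ≤ |x.2| := le_abs_self _
  have h2 : |x.2| ≤ (d.map (fun y => |y.2|)).sum := by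
    obtain ⟨t, rfl⟩ := Multiset.exists_cons_of_mem hx
    rw [Multiset.map_cons, Multiset.sum_cons]
    have : (0 : ℤ) ≤ (t.map (fun y => |y.2|)).sum :=
      Multiset.sum_nonneg (by intro z hz; obtain ⟨y, _, rfl⟩ := Multiset.mem_map.1 hz; positivity)
    omega
  omega

/-- Key conical fact: a configuration is never congruent to itself plus something nonzero. -/
lemma no_absorb {p : Multiset (V × ℤ)} {S : Multiset (V × ℤ)} (hS : S ≠ 0) :
    ¬ G.tcon p (p + S) := by
  intro h
  obtain ⟨d, h1, h2⟩ := G.tcon_iff_join.1 h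
  obtain ⟨J, hJ⟩ := exists_bound d
  have e1 : G.Phi J p = G.Phi J d := G.Phi_step J h1 hJ
  have e2 : G.Phi J (p + S) = G.Phi J d := G.Phi_step J h2 hJ
  rw [Phi_add] at e2
  have := G.Phi_pos hS J
  omega

lemma not_tcon_zero {m : Multiset (V × ℤ)} (hm : m ≠ 0) : ¬ G.tcon m 0 := by
  intro h
  obtain ⟨d, h1, h2⟩ := G.tcon_iff_join.1 h
  have hd : d = 0 := G.tstep_zero h2
  subst hd
  have h1' := G.tstep_card h1
  rw [Multiset.card_zero] at h1'
  have := Multiset.card_pos.2 hm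
  omega

/-! ### Walks -/

/-- A walk along edges from a vertex to a vertex. -/
def IsWalk : V → List Ed → V → Prop
  | a, [], b => a = b
  | a, e :: L, b => G.s e = a ∧ IsWalk (G.r e) L b

@[simp] lemma isWalk_nil {a b : V} : G.IsWalk a [] b ↔ a = b := Iff.rfl

@[simp] lemma isWalk_cons {a b : V} {e : Ed} {L : List Ed} :
    G.IsWalk a (e :: L) b ↔ G.s e = a ∧ G.IsWalk (G.r e) L b := Iff.rfl

lemma isWalk_append {L₁ L₂ : List Ed} {a c : V} :
    G.IsWalk a (L₁ ++ L₂) c ↔ ∃ b, G.IsWalk a L₁ b ∧ G.IsWalk b L₂ c := by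
  induction L₁ generalizing a with
  | nil => simp
  | cons e t ih => simp [ih, and_assoc]

lemma isWalk_reaches {a b : V} {L : List Ed} (h : G.IsWalk a L b) : G.Reaches a b := by
  induction L generalizing a with
  | nil => rw [G.isWalk_nil] at h; rw [h]; exact .refl
  | cons e t ih =>
    obtain ⟨hse, hw⟩ := h
    exact (Relation.ReflTransGen.single ⟨e, hse, rfl⟩).trans (ih hw)

lemma reaches_isWalk {a b : V} (h : G.Reaches a b) : ∃ L, G.IsWalk a L b := by
  induction h with
  | refl => exact ⟨[], rfl⟩
  | tail _ h ih =>
    obtain ⟨L, hw⟩ := ih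
    obtain ⟨e, he, hr⟩ := h
    exact ⟨L ++ [e], G.isWalk_append.2 ⟨_, hw, he, hr⟩⟩

lemma isWalk_src_reaches {a b : V} {L : List Ed} (h : G.IsWalk a L b) :
    ∀ e ∈ L, G.Reaches a (G.s e) := by
  induction L generalizing a with
  | nil => intro e he; simp at he
  | cons f t ih =>
    obtain ⟨hsf, hw⟩ := h
    intro e he
    rcases List.mem_cons.1 he with rfl | he
    · rw [hsf]; exact .refl
    · exact (Relation.ReflTransGen.single ⟨f, hsf, rfl⟩).trans (ih hw e he)

/-- No bifurcation transfers along reachability. -/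
lemma nb_trans {v w : V} (H : ∀ u, G.Reaches v u → (G.emit u).card ≤ 1)
    (h : G.Reaches v w) : ∀ u, G.Reaches w u → (G.emit u).card ≤ 1 :=
  fun u hu => H u (h.trans hu)

lemma emit_eq_singleton {a : V} {e : Ed} (hcard : (G.emit a).card ≤ 1) (he : e ∈ G.emit a) :
    G.emit a = {e} := by
  apply Finset.eq_singleton_iff_unique_mem.2
  exact ⟨he, fun x hx => Finset.card_le_one.1 hcard x hx e he⟩

/-- Under no bifurcation, a walk induces a deterministic reduction of singletons. -/
lemma walk_tstep {a b : V} {L : List Ed}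
    (Ha : ∀ u, G.Reaches a u → (G.emit u).card ≤ 1)
    (hw : G.IsWalk a L b) (i : ℤ) :
    G.TStep {(a, i)} {(b, i + L.length)} := by
  induction L generalizing a i with
  | nil => rw [hw]; simp; exact .refl
  | cons e t ih =>
    obtain ⟨hse, hw'⟩ := hw
    have he : e ∈ G.emit a := (G.mem_emit e a).2 hse
    have hemit : G.emit a = {e} := G.emit_eq_singleton (Ha a .refl) he
    have hne : G.emit a ≠ ∅ := by rw [hemit]; simp
    have hstep : G.TStep1 {(a, i)} {(G.r e, i + 1)} := by
      refine ⟨a, i, Multiset.mem_singleton_self _, hne, ?_⟩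
      rw [show ({(a, i)} : Multiset (V × ℤ)).erase (a, i) = 0 from Multiset.erase_singleton _,
        hemit]
      simp
    have hreach : G.Reaches a (G.r e) := Relation.ReflTransGen.single ⟨e, hse, rfl⟩
    have := ih (G.nb_trans Ha hreach) hw' (i + 1)
    have hdeg : (i + 1) + (t.length : ℤ) = i + ((e :: t).length : ℤ) := by
      simp; ring
    rw [hdeg] at this
    exact .head hstep this

/-- Under no bifurcation, every reduct of a singleton is a singleton along a walk. -/
lemma tstep_singleton {v : V} {i : ℤ} {d : Multiset (V × ℤ)}
    (Hv : ∀ u, G.Reaches v u → (G.emit u).card ≤ 1)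
    (h : G.TStep {(v, i)} d) :
    ∃ (w : V) (L : List Ed), G.IsWalk v L w ∧ d = {(w, i + L.length)} := by
  induction h with
  | refl => exact ⟨v, [], rfl, by simp⟩
  | tail h1 h2 ih =>
    obtain ⟨w, L, hw, rfl⟩ := ih
    obtain ⟨v', i', hm, hne, rfl⟩ := h2
    rw [Multiset.mem_singleton] at hm
    injection hm with hm1 hm2
    subst hm1; subst hm2
    obtain ⟨e, he⟩ := Finset.nonempty_iff_ne_empty.2 hne
    have hemit : G.emit v' = {e} :=
      G.emit_eq_singleton (Hv v' (G.isWalk_reaches hw)) he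
    refine ⟨G.r e, L ++ [e], G.isWalk_append.2 ⟨v', hw, (G.mem_emit e v').1 he, rfl⟩, ?_⟩
    rw [show (({(v', i + L.length)} : Multiset (V × ℤ))).erase (v', i + L.length) = 0 from
      Multiset.erase_singleton _, hemit]
    simp
    ring

/-- Under no bifurcation, walks from a common vertex are prefixes of one another. -/
lemma walk_prefix : ∀ (L₁ : List Ed) (v : V),
    (∀ u, G.Reaches v u → (G.emit u).card ≤ 1) →
    ∀ (L₂ : List Ed) (w₁ w₂ : V), G.IsWalk v L₁ w₁ → G.IsWalk v L₂ w₂ →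
    L₁.length ≤ L₂.length → ∃ L₃, L₂ = L₁ ++ L₃ ∧ G.IsWalk w₁ L₃ w₂ := by
  intro L₁
  induction L₁ with
  | nil =>
    intro v _ L₂ w₁ w₂ hw1 hw2 _
    exact ⟨L₂, rfl, by rwa [← hw1]⟩
  | cons e t ih =>
    intro v Hv L₂ w₁ w₂ hw1 hw2 hlen
    match L₂ with
    | [] => simp at hlen
    | f :: t₂ =>
      obtain ⟨hse, hw1'⟩ := hw1
      obtain ⟨hsf, hw2'⟩ := hw2
      have hef : e = f := by
        have h1 : e ∈ G.emit v := (G.mem_emit e v).2 hse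
        have h2 : f ∈ G.emit v := (G.mem_emit f v).2 hsf
        exact Finset.card_le_one.1 (Hv v .refl) e h1 f h2
      subst hef
      have hreach : G.Reaches v (G.r e) := Relation.ReflTransGen.single ⟨e, hse, rfl⟩
      obtain ⟨L₃, rfl, hw3⟩ := ih (G.r e) (G.nb_trans Hv hreach) t₂ w₁ w₂ hw1' hw2'
        (by simpa using hlen)
      exact ⟨L₃, rfl, hw3⟩

/-! ### Cycles vs closed walks -/

lemma dup_split : ∀ (L : List Ed), ¬ (L.map G.s).Nodup →
    ∃ (L₁ : List Ed) (f : Ed) (L₂ : List Ed) (g : Ed) (L₃ : List Ed),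
      L = L₁ ++ f :: (L₂ ++ g :: L₃) ∧ G.s f = G.s g := by
  intro L
  induction L with
  | nil => intro h; simp at h
  | cons e t ih =>
    intro h
    by_cases hin : G.s e ∈ t.map G.s
    · obtain ⟨g, hg, hsg⟩ := List.mem_map.1 hin
      obtain ⟨A, B, rfl⟩ := List.append_of_mem hg
      exact ⟨[], e, A, g, B, by simp, hsg.symm⟩
    · have ht : ¬ (t.map G.s).Nodup := by
        intro hn
        exact h (by rw [List.map_cons]; exact List.nodup_cons.2 ⟨hin, hn⟩)
      obtain ⟨L₁, f, L₂, g, L₃, rfl, hfg⟩ := ih ht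
      exact ⟨e :: L₁, f, L₂, g, L₃, by simp, hfg⟩

/-- Extraction of a simple closed walk from any closed walk. -/
lemma extract : ∀ (n : ℕ) (L : List Ed) (u : V), L.length ≤ n → L ≠ [] →
    G.IsWalk u L u → ∃ (p : List Ed) (w : V), p ≠ [] ∧ (∀ e ∈ p, e ∈ L) ∧
      G.IsWalk w p w ∧ (p.map G.s).Nodup := by
  intro n
  induction n with
  | zero =>
    intro L u hlen hne _
    interval_cases h : L.length
    · exact absurd (List.length_eq_zero_iff.1 h) hne
  | succ n ih =>
    intro L u hlen hne hw
    by_cases hnd : (L.map G.s).Nodup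
    · exact ⟨L, u, hne, fun e he => he, hw, hnd⟩
    · obtain ⟨L₁, f, L₂, g, L₃, rfl, hfg⟩ := G.dup_split _ hnd
      obtain ⟨x, hx1, hx2⟩ := G.isWalk_append.1 hw
      obtain ⟨hsf, hx3⟩ := hx2
      obtain ⟨y, hy1, hy2⟩ := G.isWalk_append.1 hx3
      obtain ⟨hsg, _⟩ := hy2
      have hxy : y = x := by rw [← hsg, ← hfg, hsf]
      rw [hxy] at hy1
      have hwB : G.IsWalk x (f :: L₂) x := ⟨hsf, hy1⟩
      have hlenB : (f :: L₂).length ≤ n := by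
        have := hlen
        simp only [List.length_append, List.length_cons] at this ⊢
        omega
      obtain ⟨p, w, hp1, hp2, hp3, hp4⟩ := ih (f :: L₂) x hlenB (by simp) hwB
      refine ⟨p, w, hp1, ?_, hp3, hp4⟩
      intro e he
      have := hp2 e he
      simp only [List.mem_append, List.mem_cons] at this ⊢
      tauto

/-- A nonempty simple closed walk is a cycle. -/
lemma walk_chain : ∀ (p : List Ed) (a b : V), G.IsWalk a p b → ∀ (h : p ≠ []),
    List.Chain' (fun e f => G.r e = G.s f) p ∧ G.s (p.head h) = a ∧ G.r (p.getLast h) = b := by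
  intro p
  induction p with
  | nil => intro a b _ h; exact absurd rfl h
  | cons e t ih =>
    intro a b hw h
    obtain ⟨hse, hw'⟩ := hw
    match t, hw' with
    | [], hw' =>
      refine ⟨List.isChain_singleton e, hse, ?_⟩
      rw [G.isWalk_nil] at hw'
      simpa using hw'
    | f :: t', hw' =>
      obtain ⟨hch, hhd, hlast⟩ := ih (G.r e) b hw' (by simp)
      refine ⟨List.isChain_cons_cons.2 ⟨by simpa using hhd.symm, hch⟩, hse, ?_⟩
      rwa [List.getLast_cons_cons]

lemma closed_walk_cycle {w : V} {p : List Ed} (hp : p ≠ []) (hw : G.IsWalk w p w)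
    (hnd : (p.map G.s).Nodup) : G.IsCycle p := by
  obtain ⟨hch, hhd, hlast⟩ := G.walk_chain p w w hw hp
  exact ⟨hp, hch, by rw [hlast, hhd], hnd⟩

/-- A cycle yields a closed walk based at any of its vertices. -/
lemma chain_walk : ∀ (t : List Ed) (e : Ed), List.Chain' (fun e f => G.r e = G.s f) (e :: t) →
    G.IsWalk (G.s e) (e :: t) (G.r ((e :: t).getLast (by simp))) := by
  intro t
  induction t with
  | nil => intro e _; exact ⟨rfl, by simp⟩
  | cons f t' ih =>
    intro e hch
    simp only [List.Chain', List.isChain_cons_cons] at hch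
    have := ih f hch.2
    rw [List.getLast_cons_cons]
    exact ⟨rfl, by rw [hch.1]; exact this⟩

lemma cycle_closed_walk {p : List Ed} (hc : G.IsCycle p) {e₀ : Ed} (he₀ : e₀ ∈ p) :
    ∃ L : List Ed, L ≠ [] ∧ G.IsWalk (G.s e₀) L (G.s e₀) := by
  obtain ⟨hp, hch, hclosed, _⟩ := hc
  match p, hp with
  | e :: t, hp =>
    have hwalk : G.IsWalk (G.s e) (e :: t) (G.s e) := by
      have := G.chain_walk t e hch
      rwa [show G.r ((e :: t).getLast (by simp)) = G.s ((e :: t).head (by simp)) from hclosed]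
        at this
    obtain ⟨A, B, hAB⟩ := List.append_of_mem he₀
    rw [hAB] at hwalk
    obtain ⟨x, hx1, hx2⟩ := G.isWalk_append.1 hwalk
    have hxe : x = G.s e₀ := hx2.1.symm
    subst hxe
    refine ⟨(e₀ :: B) ++ A, by simp, G.isWalk_append.2 ⟨G.s e, hx2, hx1⟩⟩

/-- Reduction along an arbitrary walk keeps track of the endpoint. -/
lemma walk_mem_red {a u : V} {L : List Ed} (hw : G.IsWalk a L u) :
    ∀ i : ℤ, ∃ A : Multiset (V × ℤ), G.TStep {(a, i)} A ∧ (u, i + L.length) ∈ A := by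
  induction L generalizing a with
  | nil =>
    intro i
    rw [G.isWalk_nil] at hw
    subst hw
    exact ⟨{(a, i)}, .refl, by simp⟩
  | cons e t ih =>
    intro i
    obtain ⟨hse, hw'⟩ := hw
    have he : e ∈ G.emit a := (G.mem_emit e a).2 hse
    have hne : G.emit a ≠ ∅ := Finset.ne_empty_of_mem he
    set M : Multiset (V × ℤ) := (G.emit a).val.map (fun e => (G.r e, i + 1)) with hM
    have hstep : G.TStep1 {(a, i)} M := by
      refine ⟨a, i, Multiset.mem_singleton_self _, hne, ?_⟩
      rw [Multiset.erase_singleton]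
      simp
      exact hM
    have hmem : ((G.r e, i + 1) : V × ℤ) ∈ M := Multiset.mem_map.2 ⟨e, he, rfl⟩
    obtain ⟨A', hstep', hmem'⟩ := ih hw' (i + 1)
    have hM' : M = {(G.r e, i + 1)} + M.erase (G.r e, i + 1) := by
      rw [Multiset.singleton_add, Multiset.cons_erase hmem]
    refine ⟨A' + M.erase (G.r e, i + 1), ?_, ?_⟩
    · refine Relation.ReflTransGen.head hstep ?_
      have h2 : G.TStep ({(G.r e, i + 1)} + M.erase (G.r e, i + 1)) (A' + M.erase (G.r e, i + 1)) :=
        G.tstep_add_right hstep' _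
      rwa [← hM'] at h2
    · have : ((u, i + 1 + (t.length : ℤ)) : V × ℤ) ∈ A' + M.erase (G.r e, i + 1) :=
        Multiset.mem_add.2 (Or.inl hmem')
      rwa [show i + 1 + (t.length : ℤ) = i + ((e :: t).length : ℤ) by simp; ring] at this

/-! ### Quotient-level helpers -/

lemma tgen_def (v : V) (i : ℤ) : G.tgen v i = G.tcon.mk' {(v, i)} := rfl

lemma tshift_tgen (n : ℤ) (v : V) (i : ℤ) : G.tshift n (G.tgen v i) = G.tgen v (i + n) := by
  show G.tcon.lift _ _ (G.tcon.mk' {(v, i)}) = _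
  erw [AddCon.lift_mk']
  show G.tcon.mk' ((shiftMul n : Multiset (V × ℤ) →+ Multiset (V × ℤ)) {(v, i)}) = G.tcon.mk' {(v, i + n)}
  have : (shiftMul n : Multiset (V × ℤ) →+ Multiset (V × ℤ)) {(v, i)} = {(v, i + n)} := by
    show Multiset.map (fun p : V × ℤ => (p.1, p.2 + n)) {(v, i)} = {(v, i + n)}
    simp
  rw [this]

lemma mk'_eq_mk' {a b : Multiset (V × ℤ)} :
    G.tcon.mk' a = G.tcon.mk' b ↔ G.tcon a b := AddCon.eq _

lemma mk'_ne_zero {B : Multiset (V × ℤ)} (h : G.tcon.mk' B ≠ 0) : B ≠ 0 := by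
  rintro rfl
  exact h (map_zero _)


end RFGraph

/-- A vertex `v` is a line-point (no bifurcation and does not connect to a cycle) if
and only if `v(0) ∈ M_E^{gr}` is minimal and aperiodic. -/
theorem line_point_iff {V Ed : Type} [DecidableEq V] (G : RFGraph V Ed) (v : V) :
    ((∀ u : V, G.Reaches v u → (G.emit u).card ≤ 1) ∧
        ¬ ∃ p : List Ed, G.IsCycle p ∧ ∃ e ∈ p, G.Reaches v (G.s e)) ↔
      (G.TMin (G.tgen v 0) ∧
        ∀ n : ℤ, G.tshift n (G.tgen v 0) = G.tgen v 0 → n = 0) := by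
  constructor
  · rintro ⟨H, hnc⟩
    constructor
    · -- minimality
      intro b hb hle
      obtain ⟨c, hc⟩ := hle
      obtain ⟨B, rfl⟩ := AddCon.mk'_surjective (c := G.tcon) b
      obtain ⟨C, rfl⟩ := AddCon.mk'_surjective (c := G.tcon) c
      have hc' : G.tcon.mk' {((v, 0) : V × ℤ)} = G.tcon.mk' (B + C) := by
        rw [map_add]; exact hc
      have hcon := G.mk'_eq_mk'.1 hc'
      obtain ⟨d, h1, h2⟩ := G.tcon_iff_join.1 hcon
      obtain ⟨w, L, hw, rfl⟩ := G.tstep_singleton H h1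
      obtain ⟨d₁, d₂, hd, hs₁, hs₂⟩ := G.tstep_split h2 B C rfl
      have hB : B ≠ 0 := G.mk'_ne_zero hb
      have hcard1 : 1 ≤ Multiset.card d₁ :=
        le_trans (Multiset.card_pos.2 hB) (G.tstep_card hs₁)
      have hcardd : Multiset.card d₁ + Multiset.card d₂ = 1 := by
        have := congrArg Multiset.card hd
        simpa [Multiset.card_add] using this.symm
      have hd₂ : d₂ = 0 := by
        rw [← Multiset.card_eq_zero]; omega
      subst hd₂
      have hC : C = 0 := by
        rw [← Multiset.card_eq_zero]
        have := G.tstep_card hs₂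
        simpa using this
      subst hC
      refine ⟨0, ?_⟩
      rw [add_zero]
      rw [hc, map_zero]
      exact (add_zero _).symm
    · -- aperiodicity
      intro n hn
      by_contra hn0
      have hshift : G.tcon.mk' {((v, n) : V × ℤ)} = G.tcon.mk' {((v, 0) : V × ℤ)} := by
        have := G.tshift_tgen n v 0
        rw [hn] at this
        have h0n : (0 : ℤ) + n = n := by ring
        rw [h0n] at this
        exact this.symm
      have hcon := G.mk'_eq_mk'.1 hshift
      obtain ⟨d, h1, h2⟩ := G.tcon_iff_join.1 hcon
      obtain ⟨w₂, L₂, hw₂, rfl⟩ := G.tstep_singleton H h1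
      obtain ⟨w₁, L₁, hw₁, hd₁⟩ := G.tstep_singleton H h2
      rw [Multiset.singleton_inj] at hd₁
      injection hd₁ with hww hdeg
      subst hww
      -- `hdeg : n + L₂.length = 0 + L₁.length`
      obtain ⟨L₃, hL₃w, hL₃ne, hL₃sub⟩ :
          ∃ L₃ : List Ed, G.IsWalk w₂ L₃ w₂ ∧ L₃ ≠ [] ∧
            (∀ e ∈ L₃, e ∈ L₁ ∨ e ∈ L₂) := by
        rcases lt_or_gt_of_ne hn0 with hneg | hpos
        · -- n < 0 : L₁ shorter
          have hlen : L₁.length ≤ L₂.length := by omega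
          obtain ⟨L₃, rfl, hw3⟩ := G.walk_prefix L₁ v H L₂ w₂ w₂ hw₁ hw₂ hlen
          refine ⟨L₃, hw3, ?_, fun e he => Or.inr (by simp [he])⟩
          intro h0
          subst h0
          simp at hdeg
          omega
        · -- n > 0 : L₂ shorter
          have hlen : L₂.length ≤ L₁.length := by omega
          obtain ⟨L₃, rfl, hw3⟩ := G.walk_prefix L₂ v H L₁ w₂ w₂ hw₂ hw₁ hlen
          refine ⟨L₃, hw3, ?_, fun e he => Or.inl (by simp [he])⟩
          intro h0
          subst h0
          simp at hdeg
          omega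
      obtain ⟨p, w', hp1, hp2, hp3, hp4⟩ := G.extract L₃.length L₃ w₂ le_rfl hL₃ne hL₃w
      refine hnc ⟨p, G.closed_walk_cycle hp1 hp3 hp4, ?_⟩
      obtain ⟨e, he⟩ : ∃ e, e ∈ p := by
        match p, hp1 with
        | e :: t, _ => exact ⟨e, by simp⟩
      refine ⟨e, he, ?_⟩
      rcases hL₃sub e (hp2 e he) with h | h
      · exact G.isWalk_src_reaches hw₁ e h
      · exact G.isWalk_src_reaches hw₂ e h
  · rintro ⟨hmin, haper⟩
    have H : ∀ u : V, G.Reaches v u → (G.emit u).card ≤ 1 := by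
      intro u hu
      by_contra hcard
      have h2c : 1 < (G.emit u).card := by omega
      obtain ⟨e₁, he₁, e₂, he₂, hee⟩ := Finset.one_lt_card.1 h2c
      obtain ⟨L, hw⟩ := G.reaches_isWalk hu
      obtain ⟨A, hstep, hmem⟩ := G.walk_mem_red hw 0
      set k : ℤ := 0 + L.length with hk
      have hne_emit : G.emit u ≠ ∅ := Finset.ne_empty_of_mem he₁
      have he₁' : e₁ ∈ (G.emit u).val := he₁
      obtain ⟨t, ht⟩ := Multiset.exists_cons_of_mem he₁'
      have he₂t : e₂ ∈ t := by
        have : e₂ ∈ (G.emit u).val := he₂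
        rw [ht] at this
        rcases Multiset.mem_cons.1 this with h | h
        · exact absurd h (Ne.symm hee)
        · exact h
      have hstep1 : G.TStep1 A (A.erase (u, k) +
          (G.emit u).val.map (fun e => (G.r e, k + 1))) := ⟨u, k, hmem, hne_emit, rfl⟩
      set R : Multiset (V × ℤ) := t.map (fun e => (G.r e, k + 1)) + A.erase (u, k) with hR
      have hA₂ : A.erase (u, k) + (G.emit u).val.map (fun e => (G.r e, k + 1)) =
          {((G.r e₁, k + 1) : V × ℤ)} + R := by
        rw [hR, ht, Multiset.map_cons, ← Multiset.singleton_add]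
        abel
      have hcon : G.tcon {((v, 0) : V × ℤ)} ({((G.r e₁, k + 1) : V × ℤ)} + R) := by
        have := G.tstep_tcon (hstep.tail hstep1)
        rwa [hA₂] at this
      set b : G.TM := G.tcon.mk' {((G.r e₁, k + 1) : V × ℤ)} with hbdef
      have hb : b ≠ 0 := by
        intro h0
        have : G.tcon.mk' {((G.r e₁, k + 1) : V × ℤ)} = G.tcon.mk' 0 := by
          rw [map_zero]; exact h0
        exact G.not_tcon_zero (by simp) (G.mk'_eq_mk'.1 this)
      have hble : algLE b (G.tgen v 0) := by
        refine ⟨G.tcon.mk' R, ?_⟩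
        show G.tcon.mk' {((v, 0) : V × ℤ)} =
          G.tcon.mk' {((G.r e₁, k + 1) : V × ℤ)} + G.tcon.mk' R
        rw [← map_add]
        exact G.mk'_eq_mk'.2 hcon
      obtain ⟨c, hc⟩ := hmin b hb hble
      obtain ⟨C, rfl⟩ := AddCon.mk'_surjective (c := G.tcon) c
      have h2 : G.tcon {((G.r e₁, k + 1) : V × ℤ)} ({((v, 0) : V × ℤ)} + C) := by
        apply G.mk'_eq_mk'.1
        rw [map_add]
        exact hc
      have h3 : G.tcon ({((v, 0) : V × ℤ)} + C) (({((G.r e₁, k + 1) : V × ℤ)} + R) + C) :=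
        G.tcon.add hcon (G.tcon.refl C)
      have h4 : G.tcon {((G.r e₁, k + 1) : V × ℤ)}
          ({((G.r e₁, k + 1) : V × ℤ)} + (R + C)) := by
        have := h2.trans h3
        rwa [add_assoc ({((G.r e₁, k + 1) : V × ℤ)} : Multiset (V × ℤ)) R C] at this
      have hRC : R + C ≠ 0 := by
        intro h0
        have : ((G.r e₂, k + 1) : V × ℤ) ∈ R + C :=
          Multiset.mem_add.2 (Or.inl (Multiset.mem_add.2 (Or.inl
            (Multiset.mem_map.2 ⟨e₂, he₂t, rfl⟩))))
        rw [h0] at this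
        simp at this
      exact G.no_absorb hRC h4
    refine ⟨H, ?_⟩
    rintro ⟨p, hcyc, e₀, he₀, hreach⟩
    obtain ⟨Lc, hLcne, hwc⟩ := G.cycle_closed_walk hcyc he₀
    obtain ⟨Lv, hwv⟩ := G.reaches_isWalk hreach
    have h1 : G.TStep {((v, 0) : V × ℤ)} {((G.s e₀, 0 + Lv.length) : V × ℤ)} :=
      G.walk_tstep H hwv 0
    have h2 : G.TStep {((G.s e₀, 0 + Lv.length) : V × ℤ)}
        {((G.s e₀, 0 + Lv.length + Lc.length) : V × ℤ)} :=
      G.walk_tstep (G.nb_trans H hreach) hwc _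
    have h3 : G.TStep {((v, (Lc.length : ℤ)) : V × ℤ)}
        {((G.s e₀, 0 + Lv.length + Lc.length) : V × ℤ)} := by
      have hlift := Relation.ReflTransGen.lift
        (fun m : Multiset (V × ℤ) => m.map (fun q : V × ℤ => (q.1, q.2 + (Lc.length : ℤ))))
        (fun a b h => G.tstep1_shift (Lc.length : ℤ) h) _ _ h1
      simp only [Function.onFun, Multiset.map_singleton] at hlift
      rwa [show (0 : ℤ) + (Lc.length : ℤ) = (Lc.length : ℤ) from by ring] at hlift
    have hcon : G.tcon {((v, 0) : V × ℤ)} {((v, (Lc.length : ℤ)) : V × ℤ)} :=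
      G.tcon_iff_join.2 ⟨_, h1.trans h2, h3⟩
    have hfix : G.tshift (Lc.length : ℤ) (G.tgen v 0) = G.tgen v 0 := by
      rw [G.tshift_tgen]
      show G.tcon.mk' _ = G.tcon.mk' _
      apply G.mk'_eq_mk'.2
      have h0l : (0 : ℤ) + (Lc.length : ℤ) = (Lc.length : ℤ) := by ring
      rw [h0l]
      exact G.tcon.symm hcon
    have := haper _ hfix
    have : Lc.length = 0 := by exact_mod_cast this
    exact hLcne (List.length_eq_zero_iff.1 this)
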